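/- arXiv:0911.5107 — 4 statements merged into one kernel-verified Lean document; each statement's English description precedes it below -/
import Mathlib

section
/- Let Υ be an invertible D×D real matrix, K an invertible N×N real matrix, and K_* an M×N real matrix. Then (Υ ⊗ K_*) (Υ ⊗ K)⁻¹ = I_D ⊗ (K_* K⁻¹). Consequently, for any y ∈ ℝ^{DN} partitioned into blocks y_1,…,y_D ∈ ℝ^N, the d-th block of the noise-free intrinsic coregionalization model predictive mean (Υ ⊗ K_*)(Υ ⊗ K)⁻¹ y equals K_* K⁻¹ y_d, i.e. it depends only on the observations of output d (autokrigeability / cancellation of inter-task transfer). -/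
open Matrix Kronecker

/-- Autokrigeability / cancellation of inter-task transfer in the noise-free intrinsic
coregionalization model: `(Υ ⊗ K_*)(Υ ⊗ K)⁻¹ = I_D ⊗ (K_* K⁻¹)`, and hence the `d`-th
block of the predictive mean `(Υ ⊗ K_*)(Υ ⊗ K)⁻¹ y` equals `K_* K⁻¹ y_d`, depending
only on the observations of output `d`. -/
theorem icm_autokrigeability {D N M : ℕ}
    (Υ : Matrix (Fin D) (Fin D) ℝ) (K : Matrix (Fin N) (Fin N) ℝ)
    (Kstar : Matrix (Fin M) (Fin N) ℝ)
    (hΥ : IsUnit Υ.det) (hK : IsUnit K.det) :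
    (Υ ⊗ₖ Kstar) * (Υ ⊗ₖ K)⁻¹ =
        (1 : Matrix (Fin D) (Fin D) ℝ) ⊗ₖ (Kstar * K⁻¹) ∧
      ∀ (y : Fin D × Fin N → ℝ) (d : Fin D) (m : Fin M),
        (((Υ ⊗ₖ Kstar) * (Υ ⊗ₖ K)⁻¹) *ᵥ y) (d, m) =
          ((Kstar * K⁻¹) *ᵥ fun n => y (d, n)) m := by
  have h : (Υ ⊗ₖ Kstar) * (Υ ⊗ₖ K)⁻¹ =
      (1 : Matrix (Fin D) (Fin D) ℝ) ⊗ₖ (Kstar * K⁻¹) := by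
    rw [Matrix.inv_kronecker, ← Matrix.mul_kronecker_mul,
      Matrix.mul_nonsing_inv _ hΥ]
  refine ⟨h, fun y d m => ?_⟩
  rw [h]
  simp only [Matrix.mulVec, dotProduct, Matrix.kroneckerMap_apply]
  rw [Fintype.sum_prod_type]
  simp [Matrix.one_apply, ite_mul, Finset.sum_ite_eq, mul_comm]
end

section
/- Let ℓ > 0, γ > 0, S ∈ ℝ and t, t' ∈ ℝ. Then S ∫_0^t exp(−γ(t − τ)) exp(−(τ − t')²/ℓ²) dτ = (S √π ℓ / 2) · exp((γℓ/2)²) · exp(−γ(t − t')) · [erf(t'/ℓ + γℓ/2) − erf((t' − t)/ℓ + γℓ/2)]. (This is the closed form of the cross-covariance k_{f_d,u_q}(t,t') between an output of the first-order differential equation model and the latent function with squared exponential covariance exp(−(t−t')²/ℓ²).) -/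
open Real intervalIntegral

/-- The error function `erf(z) = (2/√π) ∫_0^z exp(−ξ²) dξ`. -/
noncomputable def erf (z : ℝ) : ℝ :=
  (2 / Real.sqrt π) * ∫ ξ in (0 : ℝ)..z, Real.exp (-ξ ^ 2)

/-- Closed form of the cross-covariance `k_{f_d,u_q}(t,t')` between an output of the
first-order ODE model and a latent function with squared exponential covariance:
`S ∫_0^t e^{−γ(t−τ)} e^{−(τ−t')²/ℓ²} dτ
  = (S√π ℓ/2) e^{(γℓ/2)²} e^{−γ(t−t')} [erf(t'/ℓ + γℓ/2) − erf((t'−t)/ℓ + γℓ/2)]`. -/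
theorem ode_cross_covariance (ℓ γ : ℝ) (hℓ : 0 < ℓ) (hγ : 0 < γ)
    (S t t' : ℝ) :
    S * ∫ τ in (0 : ℝ)..t, Real.exp (-γ * (t - τ)) * Real.exp (-(τ - t') ^ 2 / ℓ ^ 2) =
      (S * Real.sqrt π * ℓ / 2) * Real.exp ((γ * ℓ / 2) ^ 2) *
        Real.exp (-γ * (t - t')) *
        (erf (t' / ℓ + γ * ℓ / 2) - erf ((t' - t) / ℓ + γ * ℓ / 2)) := by
  have hℓ0 : ℓ ≠ 0 := hℓ.ne'
  have hπ : (0:ℝ) < Real.sqrt π := Real.sqrt_pos.mpr Real.pi_pos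
  have key : ∀ τ : ℝ, Real.exp (-γ * (t - τ)) * Real.exp (-(τ - t') ^ 2 / ℓ ^ 2)
      = (Real.exp ((γ * ℓ / 2) ^ 2) * Real.exp (-γ * (t - t'))) *
        (fun ξ => Real.exp (-ξ ^ 2)) ((-1/ℓ) * τ + (t' / ℓ + γ * ℓ / 2)) := by
    intro τ
    simp only
    rw [← Real.exp_add, ← Real.exp_add, ← Real.exp_add]
    congr 1
    field_simp
    ring
  simp only [key]
  rw [intervalIntegral.integral_const_mul,
    intervalIntegral.integral_comp_mul_add (fun ξ => Real.exp (-ξ ^ 2))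
      (show (-1/ℓ) ≠ 0 by simp [hℓ0]) (t' / ℓ + γ * ℓ / 2)]
  have e0 : (-1/ℓ) * 0 + (t' / ℓ + γ * ℓ / 2) = t' / ℓ + γ * ℓ / 2 := by ring
  have e1 : (-1/ℓ) * t + (t' / ℓ + γ * ℓ / 2) = (t' - t) / ℓ + γ * ℓ / 2 := by
    field_simp; ring
  rw [e0, e1]
  set a := t' / ℓ + γ * ℓ / 2
  set b := (t' - t) / ℓ + γ * ℓ / 2
  have hint : ∀ u v : ℝ, IntervalIntegrable (fun ξ => Real.exp (-ξ ^ 2)) MeasureTheory.volume u v :=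
    fun u v => (Continuous.rexp (by continuity)).intervalIntegrable u v
  have hsplit : (∫ x in a..b, Real.exp (-x ^ 2))
      = (∫ x in (0:ℝ)..b, Real.exp (-x ^ 2)) - ∫ x in (0:ℝ)..a, Real.exp (-x ^ 2) := by
    have := intervalIntegral.integral_add_adjacent_intervals (hint 0 a) (hint a b)
    linarith
  rw [hsplit]
  simp only [erf, smul_eq_mul]
  field_simp
  ring
end

section
/- Let ℓ > 0 and γ_d, γ_{d'} > 0, and for γ, γ' > 0 and s, s' ∈ ℝ define H(γ, s, s') := erf(s/ℓ + γℓ/2) − erf((s − s')/ℓ + γℓ/2) and h(γ, γ', s, s') := (exp((γℓ/2)²)/(γ + γ')) · [exp((γ + γ') s) · H(γ, s, s') − H(γ, 0, s')]. Then for all t, t' ≥ 0 and S_{d}, S_{d'} ∈ ℝ, S_d S_{d'} (√π ℓ / 2) · exp(−γ_d t − γ_{d'} t') · [h(γ_{d'}, γ_d, t, t') + h(γ_d, γ_{d'}, t', t)] = S_d S_{d'} exp(−γ_d t − γ_{d'} t') ∫_0^t exp(γ_d τ) ∫_0^{t'} exp(γ_{d'} τ') exp(−(τ − τ')²/ℓ²)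 dτ' dτ. (This is the closed form of the output covariance k_{f_d,f_{d'}}(t,t') for the first-order differential equation model with squared exponential latent covariance exp(−(τ−τ')²/ℓ²).) -/
open Real intervalIntegral

/-- `H(γ, s, s') = erf(s/ℓ + γℓ/2) − erf((s − s')/ℓ + γℓ/2)`. -/
noncomputable def Hfun (ℓ γ s s' : ℝ) : ℝ :=
  erf (s / ℓ + γ * ℓ / 2) - erf ((s - s') / ℓ + γ * ℓ / 2)

/-- `h(γ, γ', s, s') = (e^{(γℓ/2)²}/(γ+γ')) [e^{(γ+γ')s} H(γ,s,s') − H(γ,0,s')]`. -/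
noncomputable def hfun (ℓ γ γ' s s' : ℝ) : ℝ :=
  (Real.exp ((γ * ℓ / 2) ^ 2) / (γ + γ')) *
    (Real.exp ((γ + γ') * s) * Hfun ℓ γ s s' - Hfun ℓ γ 0 s')

lemma hasDerivAt_erf (z : ℝ) :
    HasDerivAt erf (2 / Real.sqrt π * Real.exp (-z ^ 2)) z := by
  have hc : Continuous fun ξ : ℝ => Real.exp (-ξ ^ 2) := by continuity
  have h := intervalIntegral.integral_hasDerivAt_right
    (hc.intervalIntegrable 0 z)
    (hc.stronglyMeasurable.stronglyMeasurableAtFilter)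
    hc.continuousAt
  exact h.const_mul (2 / Real.sqrt π)

@[continuity, fun_prop]
lemma continuous_erf : Continuous erf :=
  continuous_iff_continuousAt.mpr fun z => (hasDerivAt_erf z).continuousAt

lemma hasDerivAt_serf {g : ℝ → ℝ} {g' : ℝ} {x : ℝ} (hg : HasDerivAt g g' x) :
    HasDerivAt (fun s => Real.sqrt π / 2 * erf (g s)) (Real.exp (-(g x) ^ 2) * g') x := by
  have hπ : Real.sqrt π ≠ 0 := (Real.sqrt_pos.mpr Real.pi_pos).ne'
  have h := ((hasDerivAt_erf (g x)).comp x hg).const_mul (Real.sqrt π / 2)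
  refine h.congr_deriv (Eq.symm ?_)
  field_simp

lemma outer_eq (ℓ γ γ' : ℝ) (hℓ : 0 < ℓ) (hγ : 0 < γ) (hγ' : 0 < γ') (t t' : ℝ) :
    (∫ τ in (0:ℝ)..t, Real.exp (γ * τ) *
        (Real.sqrt π * ℓ / 2 *
          (Real.exp ((γ' * ℓ / 2) ^ 2) * Real.exp (γ' * τ) * Hfun ℓ γ' τ t'))) =
      Real.sqrt π * ℓ / 2 * (hfun ℓ γ' γ t t' + hfun ℓ γ γ' t' t) := by
  have hℓ0 : ℓ ≠ 0 := hℓ.ne'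
  have hcne : γ + γ' ≠ 0 := by positivity
  set A' : ℝ := Real.exp ((γ' * ℓ / 2) ^ 2) with hA'
  set A : ℝ := Real.exp ((γ * ℓ / 2) ^ 2) with hA
  set G : ℝ → ℝ := fun s =>
    (ℓ * A' / (γ + γ')) *
      (Real.exp ((γ + γ') * s) *
        (Real.sqrt π / 2 * erf (s / ℓ + γ' * ℓ / 2)
          - Real.sqrt π / 2 * erf ((s - t') / ℓ + γ' * ℓ / 2))
        - (Real.sqrt π / 2 * erf (0 / ℓ + γ' * ℓ / 2)
          - Real.sqrt π / 2 * erf ((0 - t') / ℓ + γ' * ℓ / 2)))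
    + (ℓ * A / (γ + γ')) *
      (Real.exp ((γ + γ') * t') * (Real.sqrt π / 2 * erf (t' / ℓ + γ * ℓ / 2)
          - Real.sqrt π / 2 * erf ((t' - s) / ℓ + γ * ℓ / 2))
        - (Real.sqrt π / 2 * erf (0 / ℓ + γ * ℓ / 2)
          - Real.sqrt π / 2 * erf ((0 - s) / ℓ + γ * ℓ / 2))) with hGdef
  have key : ∀ x : ℝ, HasDerivAt G
      (Real.exp (γ * x) *
        (Real.sqrt π * ℓ / 2 * (A' * Real.exp (γ' * x) * Hfun ℓ γ' x t'))) x := by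
    intro x
    have hg1 : HasDerivAt (fun s : ℝ => s / ℓ + γ' * ℓ / 2) (1 / ℓ) x := by
      simpa using ((hasDerivAt_id x).div_const ℓ).add_const (γ' * ℓ / 2)
    have hg2 : HasDerivAt (fun s : ℝ => (s - t') / ℓ + γ' * ℓ / 2) (1 / ℓ) x := by
      simpa using (((hasDerivAt_id x).sub_const t').div_const ℓ).add_const (γ' * ℓ / 2)
    have hg3 : HasDerivAt (fun s : ℝ => (t' - s) / ℓ + γ * ℓ / 2) (-1 / ℓ) x := by
      simpa using (((hasDerivAt_id x).const_sub t').div_const ℓ).add_const (γ * ℓ / 2)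
    have hg4 : HasDerivAt (fun s : ℝ => (0 - s) / ℓ + γ * ℓ / 2) (-1 / ℓ) x := by
      simpa using (((hasDerivAt_id x).const_sub 0).div_const ℓ).add_const (γ * ℓ / 2)
    have he : HasDerivAt (fun s : ℝ => Real.exp ((γ + γ') * s))
        (Real.exp ((γ + γ') * x) * (γ + γ')) x := by
      simpa using (((hasDerivAt_id x).const_mul (γ + γ')).exp)
    have d1 := hasDerivAt_serf hg1
    have d2 := hasDerivAt_serf hg2
    have d3 := hasDerivAt_serf hg3
    have d4 := hasDerivAt_serf hg4
    have h1 := (((he.mul (d1.sub d2)).sub_const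
        (Real.sqrt π / 2 * erf (0 / ℓ + γ' * ℓ / 2)
          - Real.sqrt π / 2 * erf ((0 - t') / ℓ + γ' * ℓ / 2))).const_mul
      (ℓ * A' / (γ + γ')))
    have h2 := ((((d3.const_sub (Real.sqrt π / 2 * erf (t' / ℓ + γ * ℓ / 2))).const_mul
        (Real.exp ((γ + γ') * t'))).sub
        (d4.const_sub (Real.sqrt π / 2 * erf (0 / ℓ + γ * ℓ / 2)))).const_mul
      (ℓ * A / (γ + γ')))
    have hD := h1.add h2
    refine hD.congr_deriv (Eq.symm ?_)
    simp only [Hfun, Pi.mul_apply, Pi.sub_apply]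
    have h0 : Real.exp ((γ + γ') * x) = Real.exp (γ * x) * Real.exp (γ' * x) := by
      rw [← Real.exp_add]; ring_nf
    have hid1 : A' * (Real.exp (γ * x) * Real.exp (γ' * x)) *
        Real.exp (-(x / ℓ + γ' * ℓ / 2) ^ 2) =
        A * Real.exp (-((0 - x) / ℓ + γ * ℓ / 2) ^ 2) := by
      rw [hA, hA']
      simp only [← Real.exp_add]
      rw [Real.exp_eq_exp]
      field_simp
      ring
    have hid2 : A' * (Real.exp (γ * x) * Real.exp (γ' * x)) *
        Real.exp (-((x - t') / ℓ + γ' * ℓ / 2) ^ 2) =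
        A * Real.exp ((γ + γ') * t') * Real.exp (-((t' - x) / ℓ + γ * ℓ / 2) ^ 2) := by
      rw [hA, hA']
      simp only [← Real.exp_add]
      rw [Real.exp_eq_exp]
      field_simp
      ring
    rw [h0]
    set e1 := erf (x / ℓ + γ' * ℓ / 2)
    set e2 := erf ((x - t') / ℓ + γ' * ℓ / 2)
    set E1 := Real.exp (-(x / ℓ + γ' * ℓ / 2) ^ 2)
    set E2 := Real.exp (-((x - t') / ℓ + γ' * ℓ / 2) ^ 2)
    set E3 := Real.exp (-((t' - x) / ℓ + γ * ℓ / 2) ^ 2)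
    set E4 := Real.exp (-((0 - x) / ℓ + γ * ℓ / 2) ^ 2)
    set X := Real.exp (γ * x)
    set Y := Real.exp (γ' * x)
    set T := Real.exp ((γ + γ') * t')
    field_simp
    linear_combination 2*hid2 - 2*hid1
  have hcont : Continuous fun x => Real.exp (γ * x) *
      (Real.sqrt π * ℓ / 2 * (A' * Real.exp (γ' * x) * Hfun ℓ γ' x t')) := by
    unfold Hfun
    fun_prop
  have hint := intervalIntegral.integral_eq_sub_of_hasDerivAt
    (f := G) (fun x _ => key x) (hcont.intervalIntegrable 0 t)
  rw [hint, hGdef]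
  simp only [hfun, Hfun, sub_zero, mul_zero, Real.exp_zero, hA, hA']
  ring

lemma inner_eq (ℓ γ' : ℝ) (hℓ : 0 < ℓ) (τ t' : ℝ) :
    (∫ τ' in (0:ℝ)..t', Real.exp (γ' * τ') * Real.exp (-(τ - τ') ^ 2 / ℓ ^ 2)) =
      Real.sqrt π * ℓ / 2 *
        (Real.exp ((γ' * ℓ / 2) ^ 2) * Real.exp (γ' * τ) * Hfun ℓ γ' τ t') := by
  have hℓ0 : ℓ ≠ 0 := hℓ.ne'
  set C : ℝ := ℓ * (Real.exp ((γ' * ℓ / 2) ^ 2) * Real.exp (γ' * τ)) with hC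
  have key : ∀ x : ℝ, HasDerivAt
      (fun s => -C * (Real.sqrt π / 2 * erf ((τ - s) / ℓ + γ' * ℓ / 2)))
      (Real.exp (γ' * x) * Real.exp (-(τ - x) ^ 2 / ℓ ^ 2)) x := by
    intro x
    have hg : HasDerivAt (fun s : ℝ => (τ - s) / ℓ + γ' * ℓ / 2) (-1 / ℓ) x := by
      have := (((hasDerivAt_id x).const_sub τ).div_const ℓ).add_const (γ' * ℓ / 2)
      simpa using this
    have h := (hasDerivAt_serf hg).const_mul (-C)
    refine h.congr_deriv (Eq.symm ?_)
    have hexp : γ' * x + (-(τ - x) ^ 2 / ℓ ^ 2) =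
        (γ' * ℓ / 2) ^ 2 + γ' * τ + (-((τ - x) / ℓ + γ' * ℓ / 2) ^ 2) := by
      field_simp
      ring
    rw [← Real.exp_add, hexp, Real.exp_add, Real.exp_add]
    field_simp
    ring
    rw [hC]; ring
  have hcont : Continuous fun s => Real.exp (γ' * s) * Real.exp (-(τ - s) ^ 2 / ℓ ^ 2) := by
    continuity
  have hint := intervalIntegral.integral_eq_sub_of_hasDerivAt
    (f := fun s => -C * (Real.sqrt π / 2 * erf ((τ - s) / ℓ + γ' * ℓ / 2)))
    (fun x _ => key x) (hcont.intervalIntegrable 0 t')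
  rw [hint]
  simp only [Hfun, sub_zero]
  ring

/-- Closed form of the output covariance `k_{f_d,f_{d'}}(t,t')` for the first-order
ODE model with squared exponential latent covariance. -/
theorem ode_output_covariance (ℓ γd γd' : ℝ) (hℓ : 0 < ℓ)
    (hγd : 0 < γd) (hγd' : 0 < γd')
    (t t' : ℝ) (ht : 0 ≤ t) (ht' : 0 ≤ t') (Sd Sd' : ℝ) :
    Sd * Sd' * (Real.sqrt π * ℓ / 2) * Real.exp (-γd * t - γd' * t') *
        (hfun ℓ γd' γd t t' + hfun ℓ γd γd' t' t) =
      Sd * Sd' * Real.exp (-γd * t - γd' * t') *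
        ∫ τ in (0 : ℝ)..t, Real.exp (γd * τ) *
          ∫ τ' in (0 : ℝ)..t', Real.exp (γd' * τ') *
            Real.exp (-(τ - τ') ^ 2 / ℓ ^ 2) := by
  have h1 : ∀ τ : ℝ, (∫ τ' in (0:ℝ)..t', Real.exp (γd' * τ') *
      Real.exp (-(τ - τ') ^ 2 / ℓ ^ 2)) =
      Real.sqrt π * ℓ / 2 *
        (Real.exp ((γd' * ℓ / 2) ^ 2) * Real.exp (γd' * τ) * Hfun ℓ γd' τ t') :=
    fun τ => inner_eq ℓ γd' hℓ τ t'
  simp only [h1]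
  rw [outer_eq ℓ γd γd' hℓ hγd hγd' t t']
  ring
end

section
/- Let K_{u,u} be a symmetric positive definite K×K real matrix, K_{f,f} a (DN)×(DN) real matrix indexed by pairs (d,n), and K_{f,u} a (DN)×K real matrix with K_{u,f} = K_{f,u}ᵀ, such that the block matrix [[K_{u,u}, K_{u,f}],[K_{f,u}, K_{f,f}]] is positive semidefinite. Let D_P := (K_{f,f} − K_{f,u} K_{u,u}⁻¹ K_{u,f}) ⊙ (I_D ⊗ 1_N) be the block-diagonal part of the Schur complement, where 1_N is the N×N all-ones matrix. Then the PITC approximate covariance matrix D_P + K_{f,u} K_{u,u}⁻¹ K_{u,f} is positive semidefinite, so it is a valid covariance matrix. -/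
open Matrix Kronecker
open scoped Matrix

lemma hadamard_blockdiag_posSemidef {ι κ : Type*} [Fintype ι] [DecidableEq ι] [Fintype κ]
    {S : Matrix (ι × κ) (ι × κ) ℝ} (hS : S.PosSemidef) :
    (S ⊙ ((1 : Matrix ι ι ℝ) ⊗ₖ (Matrix.of fun _ _ => (1 : ℝ)))).PosSemidef := by
  rw [Matrix.posSemidef_iff_dotProduct_mulVec]
  constructor
  · ext p q
    have := hS.1
    rw [Matrix.IsHermitian] at this
    have h2 : S q p = S p q := by
      conv_lhs => rw [← this]
      simp [Matrix.conjTranspose_apply]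
    simp [Matrix.hadamard_apply, Matrix.one_apply, h2, eq_comm]
  · intro x
    set y : ι → (ι × κ) → ℝ := fun d p => if p.1 = d then x p else 0 with hy
    have key : x ⬝ᵥ (S ⊙ ((1 : Matrix ι ι ℝ) ⊗ₖ (Matrix.of fun _ _ => (1:ℝ)))) *ᵥ x
        = ∑ d, (y d) ⬝ᵥ S *ᵥ (y d) := by
      simp only [dotProduct, Matrix.mulVec, Matrix.hadamard_apply,
        Matrix.kroneckerMap_apply, Matrix.one_apply, Matrix.of_apply, Finset.mul_sum,
        Finset.sum_mul, hy]
      rw [show ∑ d : ι, ∑ p : ι × κ, ∑ q : ι × κ,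
            (if p.1 = d then x p else 0) * (S p q * if q.1 = d then x q else 0)
          = ∑ p : ι × κ, ∑ q : ι × κ, ∑ d : ι,
            (if p.1 = d then x p else 0) * (S p q * if q.1 = d then x q else 0) from by
        rw [Finset.sum_comm]
        exact Finset.sum_congr rfl fun p _ => Finset.sum_comm]
      refine Finset.sum_congr rfl fun p _ => ?_
      refine Finset.sum_congr rfl fun q _ => ?_
      by_cases h : p.1 = q.1
      · simp [h, Finset.sum_ite_eq' Finset.univ q.1]
      · simp [h]
    rw [star_trivial, key]
    exact Finset.sum_nonneg fun d _ => by simpa using hS.dotProduct_mulVec_nonneg (y d)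

/-- The PITC approximate covariance `D_P + K_{f,u} K_{u,u}⁻¹ K_{u,f}` is positive
semidefinite, where `D_P` is the output-wise block-diagonal part of the Schur
complement `K_{f,f} − K_{f,u} K_{u,u}⁻¹ K_{u,f}`. -/
theorem pitc_covariance_posSemidef {K D N : ℕ}
    (Kuu : Matrix (Fin K) (Fin K) ℝ)
    (Kff : Matrix (Fin D × Fin N) (Fin D × Fin N) ℝ)
    (Kfu : Matrix (Fin D × Fin N) (Fin K) ℝ)
    (Kuf : Matrix (Fin K) (Fin D × Fin N) ℝ)
    (hKuu : Kuu.PosDef) (hKuusymm : Kuu.IsSymm)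
    (hKuf : Kuf = Kfuᵀ)
    (hblock : (Matrix.fromBlocks Kuu Kuf Kfu Kff).PosSemidef) :
    (((Kff - Kfu * Kuu⁻¹ * Kuf) ⊙ ((1 : Matrix (Fin D) (Fin D) ℝ) ⊗ₖ
          (Matrix.of fun (_ _ : Fin N) => (1 : ℝ)))) +
        Kfu * Kuu⁻¹ * Kuf).PosSemidef := by
  haveI : Invertible Kuu := Kuu.invertibleOfIsUnitDet (isUnit_iff_ne_zero.mpr hKuu.det_pos.ne')
  have hKfu : Kfu = Kufᴴ := by
    rw [hKuf, Matrix.conjTranspose_eq_transpose_of_trivial, Matrix.transpose_transpose]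
  have hS : (Kff - Kfu * Kuu⁻¹ * Kuf).PosSemidef := by
    rw [hKfu]
    exact (Matrix.PosDef.fromBlocks₁₁ Kuf Kff hKuu).mp (by rwa [← hKfu])
  have hT : (Kfu * Kuu⁻¹ * Kuf).PosSemidef := by
    have := (hKuu.inv.posSemidef).mul_mul_conjTranspose_same Kfu
    rwa [hKuf, ← Matrix.conjTranspose_eq_transpose_of_trivial]
  exact (hadamard_blockdiag_posSemidef hS).add hT
end
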